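/- Let θ₀, θ∞, η₀, η∞ be complex constants and let U ⊆ ℂ be an open set not containing 0. Suppose f, g : ℂ → ℂ are differentiable on U and satisfy the Okamoto Hamiltonian system f'(t) = (4 f(t)² g(t) − 2 η∞ t f(t)² − (1 + 2θ₀) f(t) + 2 η₀ t)/t and g'(t) = −(4 f(t) g(t)² − (1 + 2θ₀ + 4 η∞ t f(t)) g(t) + η∞ (θ₀ + θ∞) t)/t for all t ∈ U, and that f(t) ≠ 0 on U. Then f satisfies the third Painlevé equation f''(t) = f'(t)²/f(t) − f'(t)/t + (α f(t)² + β)/t + γ f(t)³ + δ/f(t) on U, with parameters α = −4 η∞ θ∞, β = 4 η₀(1 + θ₀), γ = 4 η∞², δ = −4 η₀². -/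

import Mathlib

/-- Algebraic core: the Okamoto system relations imply the PIII identity. -/
theorem okamoto_PIII_alg (θ₀ θinf η₀ ηinf t F G df dg : ℂ) (ht : t ≠ 0) (hF : F ≠ 0)
    (hdf : 4 * F ^ 2 * G - 2 * ηinf * t * F ^ 2 - (1 + 2 * θ₀) * F + 2 * η₀ * t = df * t)
    (hdg : 4 * F * G ^ 2 - (1 + 2 * θ₀ + 4 * ηinf * t * F) * G + ηinf * (θ₀ + θinf) * t = -dg * t) :
    ((4 * (2 * F * df) * G + 4 * F ^ 2 * dg
      - (2 * ηinf * F ^ 2 + 2 * ηinf * t * (2 * F * df))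
      - (1 + 2 * θ₀) * df + 2 * η₀) * t
      - (4 * F ^ 2 * G - 2 * ηinf * t * F ^ 2 - (1 + 2 * θ₀) * F + 2 * η₀ * t) * 1) / t ^ 2 =
    df ^ 2 / F - df / t
      + ((-4 * ηinf * θinf) * F ^ 2 + 4 * η₀ * (1 + θ₀)) / t
      + (4 * ηinf ^ 2) * F ^ 3 + (-4 * η₀ ^ 2) / F := by
  have hrhs : df ^ 2 / F - df / t
      + ((-4 * ηinf * θinf) * F ^ 2 + 4 * η₀ * (1 + θ₀)) / t
      + (4 * ηinf ^ 2) * F ^ 3 + (-4 * η₀ ^ 2) / F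
      = (df ^ 2 * t - F * df + F * ((-4 * ηinf * θinf) * F ^ 2 + 4 * η₀ * (1 + θ₀))
          + 4 * ηinf ^ 2 * F ^ 4 * t - 4 * η₀ ^ 2 * t) / (F * t) := by
    field_simp
    ring
  rw [hrhs, div_eq_div_iff (pow_ne_zero 2 ht) (mul_ne_zero hF ht)]
  linear_combination (-t * (-t * df + 4 * F ^ 2 * G - 2 * ηinf * t * F ^ 2 + F - 2 * η₀ * t)) * hdf
    + (t * (4 * F ^ 3)) * hdg

/-- Solutions of the Okamoto Hamiltonian system for PIII give
solutions of the third Painlevé equation with parameters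
`α = −4η∞θ∞`, `β = 4η₀(1+θ₀)`, `γ = 4η∞²`, `δ = −4η₀²`. -/
theorem okamoto_system_gives_PIII (θ₀ θinf η₀ ηinf : ℂ) (U : Set ℂ)
    (hU : IsOpen U) (hU0 : (0 : ℂ) ∉ U) (f g : ℂ → ℂ)
    (hf : ∀ t ∈ U, HasDerivAt f
      ((4 * (f t) ^ 2 * g t - 2 * ηinf * t * (f t) ^ 2 - (1 + 2 * θ₀) * f t + 2 * η₀ * t) / t) t)
    (hg : ∀ t ∈ U, HasDerivAt g
      (-((4 * f t * (g t) ^ 2 - (1 + 2 * θ₀ + 4 * ηinf * t * f t) * g t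
        + ηinf * (θ₀ + θinf) * t) / t)) t)
    (hfne : ∀ t ∈ U, f t ≠ 0) :
    ∀ t ∈ U, deriv (deriv f) t =
      (deriv f t) ^ 2 / f t - deriv f t / t
        + ((-4 * ηinf * θinf) * (f t) ^ 2 + 4 * η₀ * (1 + θ₀)) / t
        + (4 * ηinf ^ 2) * (f t) ^ 3 + (-4 * η₀ ^ 2) / f t := by
  intro t ht
  have htne : t ≠ 0 := fun h => hU0 (h ▸ ht)
  obtain ⟨df, hdf⟩ : ∃ d, (4 * (f t) ^ 2 * g t - 2 * ηinf * t * (f t) ^ 2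
      - (1 + 2 * θ₀) * f t + 2 * η₀ * t) / t = d := ⟨_, rfl⟩
  obtain ⟨dg, hdg⟩ : ∃ d, -((4 * f t * (g t) ^ 2 - (1 + 2 * θ₀ + 4 * ηinf * t * f t) * g t
        + ηinf * (θ₀ + θinf) * t) / t) = d := ⟨_, rfl⟩
  have hft : HasDerivAt f df t := hdf ▸ hf t ht
  have hgt : HasDerivAt g dg t := hdg ▸ hg t ht
  have hN : HasDerivAt (fun s => 4 * (f s) ^ 2 * g s - 2 * ηinf * s * (f s) ^ 2
      - (1 + 2 * θ₀) * f s + 2 * η₀ * s)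
      (4 * (2 * f t * df) * g t + 4 * (f t) ^ 2 * dg
        - (2 * ηinf * (f t) ^ 2 + 2 * ηinf * t * (2 * f t * df))
        - (1 + 2 * θ₀) * df + 2 * η₀) t := by
    have h1 : HasDerivAt (fun s => (f s) ^ 2) (2 * f t * df) t := by
      have := hft.pow 2
      simp only [Nat.cast_ofNat, Nat.reduceSub, pow_one] at this
      exact this
    have h2 : HasDerivAt (fun s => 4 * (f s) ^ 2 * g s)
        (4 * (2 * f t * df) * g t + 4 * (f t) ^ 2 * dg) t := by
      have := ((h1.const_mul 4).mul hgt)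
      exact this
    have h3 : HasDerivAt (fun s => 2 * ηinf * s * (f s) ^ 2)
        (2 * ηinf * (f t) ^ 2 + 2 * ηinf * t * (2 * f t * df)) t := by
      have hs : HasDerivAt (fun s : ℂ => 2 * ηinf * s) (2 * ηinf) t := by
        simpa using (hasDerivAt_id t).const_mul (2 * ηinf)
      have := hs.mul h1
      exact this
    have h4 : HasDerivAt (fun s => (1 + 2 * θ₀) * f s) ((1 + 2 * θ₀) * df) t :=
      hft.const_mul _
    have h5 : HasDerivAt (fun s : ℂ => 2 * η₀ * s) (2 * η₀) t := by
      simpa using (hasDerivAt_id t).const_mul (2 * η₀)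
    exact ((h2.sub h3).sub h4).add h5
  have hQ : HasDerivAt (fun s => (4 * (f s) ^ 2 * g s - 2 * ηinf * s * (f s) ^ 2
      - (1 + 2 * θ₀) * f s + 2 * η₀ * s) / s)
      (((4 * (2 * f t * df) * g t + 4 * (f t) ^ 2 * dg
        - (2 * ηinf * (f t) ^ 2 + 2 * ηinf * t * (2 * f t * df))
        - (1 + 2 * θ₀) * df + 2 * η₀) * t - (4 * (f t) ^ 2 * g t - 2 * ηinf * t * (f t) ^ 2
        - (1 + 2 * θ₀) * f t + 2 * η₀ * t) * 1) / t ^ 2) t :=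
    hN.div (hasDerivAt_id t) htne
  have hev : deriv f =ᶠ[nhds t] (fun s => (4 * (f s) ^ 2 * g s - 2 * ηinf * s * (f s) ^ 2
      - (1 + 2 * θ₀) * f s + 2 * η₀ * s) / s) := by
    filter_upwards [hU.mem_nhds ht] with s hs
    exact (hf s hs).deriv
  have hderiv2 := hev.deriv_eq.trans hQ.deriv
  rw [hderiv2, hft.deriv]
  refine okamoto_PIII_alg θ₀ θinf η₀ ηinf t (f t) (g t) df dg htne (hfne t ht) ?_ ?_
  · exact (div_eq_iff htne).mp hdf
  · have : (4 * f t * (g t) ^ 2 - (1 + 2 * θ₀ + 4 * ηinf * t * f t) * g t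
        + ηinf * (θ₀ + θinf) * t) / t = -dg := by
      linear_combination -hdg
    calc 4 * f t * (g t) ^ 2 - (1 + 2 * θ₀ + 4 * ηinf * t * f t) * g t
        + ηinf * (θ₀ + θinf) * t = ((4 * f t * (g t) ^ 2 - (1 + 2 * θ₀ + 4 * ηinf * t * f t) * g t
        + ηinf * (θ₀ + θinf) * t) / t) * t := by field_simp
      _ = -dg * t := by rw [this]
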